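/- Let k(y,y') = F(‖y−y'‖) be a kernel on ℝ^q where F(x) = ∫_x^∞ f(u) du for a nonnegative continuous function f with ∫_0^∞ f = 1, and let (y_t) be a stationary process with β-mixing coefficients β(t). Then the kernel autocovariance coefficient ϱ_t = |E⟨Φ(y_t) − E Φ(y_t), Φ(y_0) − E Φ(y_0)⟩_H| satisfies ϱ_t ≤ β(t), where Φ is the canonical feature map into the RKHS H of k. -/

import Mathlib

open MeasureTheory

lemma tv_bound {X : Type*} [MeasurableSpace X] (P Q : Measure X)
    [IsProbabilityMeasure P] [IsProbabilityMeasure Q] {g : X → ℝ} (hg : Measurable g)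
    (h0 : ∀ x, 0 ≤ g x) (h1 : ∀ x, g x ≤ 1) {β : ℝ}
    (hβ : ∀ B : Set X, MeasurableSet B → |(P B).toReal - (Q B).toReal| ≤ β) :
    |∫ x, g x ∂P - ∫ x, g x ∂Q| ≤ β := by
  have hintP : Integrable g P := by
    refine (integrable_const (1:ℝ)).mono' hg.aestronglyMeasurable ?_
    exact Filter.Eventually.of_forall fun x => by
      rw [Real.norm_eq_abs, abs_of_nonneg (h0 x)]; exact h1 x
  have hintQ : Integrable g Q := by
    refine (integrable_const (1:ℝ)).mono' hg.aestronglyMeasurable ?_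
    exact Filter.Eventually.of_forall fun x => by
      rw [Real.norm_eq_abs, abs_of_nonneg (h0 x)]; exact h1 x
  rw [hintP.integral_eq_integral_Ioc_meas_le (Filter.Eventually.of_forall h0)
      (Filter.Eventually.of_forall h1),
    hintQ.integral_eq_integral_Ioc_meas_le (Filter.Eventually.of_forall h0)
      (Filter.Eventually.of_forall h1)]
  have measP : Measurable fun t : ℝ => (P {a | t ≤ g a}).toReal := by
    refine Measurable.ennreal_toReal (Antitone.measurable ?_)
    exact fun s t hst => measure_mono fun a ha => le_trans hst ha
  have measQ : Measurable fun t : ℝ => (Q {a | t ≤ g a}).toReal := by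
    refine Measurable.ennreal_toReal (Antitone.measurable ?_)
    exact fun s t hst => measure_mono fun a ha => le_trans hst ha
  have intP : IntegrableOn (fun t : ℝ => (P {a | t ≤ g a}).toReal) (Set.Ioc 0 1) := by
    refine (integrable_const (1:ℝ)).mono' measP.aestronglyMeasurable ?_
    refine Filter.Eventually.of_forall fun t => ?_
    rw [Real.norm_eq_abs, abs_of_nonneg ENNReal.toReal_nonneg]
    exact ENNReal.toReal_le_of_le_ofReal zero_le_one (by simpa using prob_le_one)
  have intQ : IntegrableOn (fun t : ℝ => (Q {a | t ≤ g a}).toReal) (Set.Ioc 0 1) := by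
    refine (integrable_const (1:ℝ)).mono' measQ.aestronglyMeasurable ?_
    refine Filter.Eventually.of_forall fun t => ?_
    rw [Real.norm_eq_abs, abs_of_nonneg ENNReal.toReal_nonneg]
    exact ENNReal.toReal_le_of_le_ofReal zero_le_one (by simpa using prob_le_one)
  simp only [measureReal_def]
  rw [← integral_sub intP intQ]
  have hvol : (volume (Set.Ioc (0:ℝ) 1)) < ⊤ := by simp
  calc |∫ t in Set.Ioc (0:ℝ) 1, ((P {a | t ≤ g a}).toReal - (Q {a | t ≤ g a}).toReal)|
      ≤ β * (volume (Set.Ioc (0:ℝ) 1)).toReal := by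
        rw [← Real.norm_eq_abs]
        refine norm_setIntegral_le_of_norm_le_const hvol (fun t _ => ?_)
        · rw [Real.norm_eq_abs]
          exact hβ _ (hg measurableSet_Ici)
    _ = β := by simp

/-- For a kernel `k(x,y) = F(‖x−y‖)` with `F(x) = ∫_x^∞ f`, `f ≥ 0` continuous,
`∫_0^∞ f = 1`, the kernel autocovariance coefficient
`ϱ_t = |∫ k dP_{0:t} − ∬ k dP_0 dP_0|` is bounded by the β-mixing coefficient `β(t)`,
the latter being any bound on `|P_{0:t}(B) − (P_0 ⊗ P_0)(B)|` over measurable sets `B`. -/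
theorem stmt_2 {q : ℕ} {Ω : Type*} [MeasurableSpace Ω]
    (μ : Measure Ω) [IsProbabilityMeasure μ]
    (y0 yt : Ω → EuclideanSpace ℝ (Fin q)) (hy0 : Measurable y0) (hyt : Measurable yt)
    (f : ℝ → ℝ) (hfc : Continuous f) (hf0 : ∀ u, 0 ≤ f u)
    (hf1 : ∫ u in Set.Ioi (0 : ℝ), f u = 1)
    (F : ℝ → ℝ) (hF : ∀ x, F x = ∫ u in Set.Ioi x, f u)
    (k : EuclideanSpace ℝ (Fin q) → EuclideanSpace ℝ (Fin q) → ℝ)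
    (hk : ∀ x y, k x y = F (dist x y))
    (hstat : μ.map yt = μ.map y0)
    (β : ℝ)
    (hβ : ∀ B : Set (EuclideanSpace ℝ (Fin q) × EuclideanSpace ℝ (Fin q)),
      MeasurableSet B →
      |((μ.map (fun ω => (y0 ω, yt ω))) B).toReal
        - (((μ.map y0).prod (μ.map y0)) B).toReal| ≤ β) :
    |(∫ p, k p.1 p.2 ∂(μ.map (fun ω => (y0 ω, yt ω))))
      - ∫ x, ∫ y, k x y ∂(μ.map y0) ∂(μ.map y0)| ≤ β := by
  -- f is integrable on Ioi 0
  have hfint : IntegrableOn f (Set.Ioi (0:ℝ)) := by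
    by_contra h
    rw [integral_undef h] at hf1
    exact one_ne_zero hf1.symm
  -- primitive G
  set G : ℝ → ℝ := fun x => 1 - ∫ t in (0:ℝ)..x, f t with hG
  have hGc : Continuous G := by
    exact continuous_const.sub
      (intervalIntegral.continuous_primitive (fun a b => hfc.intervalIntegrable a b) 0)
  have hFG : ∀ x : ℝ, 0 ≤ x → F x = G x := by
    intro x hx
    have hsplit : ∫ u in Set.Ioi (0:ℝ), f u
        = (∫ u in Set.Ioc 0 x, f u) + ∫ u in Set.Ioi x, f u := by
      rw [← setIntegral_union (Set.Ioc_disjoint_Ioi le_rfl) measurableSet_Ioi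
        (hfint.mono_set Set.Ioc_subset_Ioi_self) (hfint.mono_set (Set.Ioi_subset_Ioi hx)),
        Set.Ioc_union_Ioi_eq_Ioi hx]
    rw [hF, hG]
    simp only
    rw [intervalIntegral.integral_of_le hx]
    linarith [hf1, hsplit]
  -- bounds for F on nonneg reals
  have hFnn : ∀ x : ℝ, 0 ≤ x → 0 ≤ F x := fun x hx => by
    rw [hF]; exact setIntegral_nonneg measurableSet_Ioi fun u _ => hf0 u
  have hFle : ∀ x : ℝ, 0 ≤ x → F x ≤ 1 := fun x hx => by
    rw [hF, ← hf1]
    exact setIntegral_mono_set hfint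
      (Filter.Eventually.of_forall fun u => hf0 u)
      (Filter.Eventually.of_forall (Set.Ioi_subset_Ioi hx))
  -- the function on the product space
  set g : EuclideanSpace ℝ (Fin q) × EuclideanSpace ℝ (Fin q) → ℝ :=
    fun p => k p.1 p.2 with hg
  have hgG : ∀ p, g p = G (dist p.1 p.2) := fun p => by
    rw [hg]; simp only; rw [hk, hFG _ dist_nonneg]
  have hgc : Continuous g := by
    have : Continuous fun p : EuclideanSpace ℝ (Fin q) × EuclideanSpace ℝ (Fin q) =>
        G (dist p.1 p.2) := hGc.comp (continuous_fst.dist continuous_snd)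
    exact this.congr fun p => (hgG p).symm
  have hgm : Measurable g := hgc.measurable
  have hg0 : ∀ p, 0 ≤ g p := fun p => by rw [hg]; simpa [hk] using hFnn _ dist_nonneg
  have hg1 : ∀ p, g p ≤ 1 := fun p => by rw [hg]; simpa [hk] using hFle _ dist_nonneg
  -- probability measure instances
  have h1 : IsProbabilityMeasure (μ.map (fun ω => (y0 ω, yt ω))) :=
    Measure.isProbabilityMeasure_map (hy0.prodMk hyt).aemeasurable
  have h2 : IsProbabilityMeasure (μ.map y0) := Measure.isProbabilityMeasure_map hy0.aemeasurable
  have h3 : IsProbabilityMeasure ((μ.map y0).prod (μ.map y0)) := by infer_instance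
  -- iterated integral equals product integral
  have hintg : Integrable g ((μ.map y0).prod (μ.map y0)) := by
    refine (integrable_const (1:ℝ)).mono' hgm.aestronglyMeasurable ?_
    exact Filter.Eventually.of_forall fun p => by
      rw [Real.norm_eq_abs, abs_of_nonneg (hg0 p)]; exact hg1 p
  have hiter : ∫ x, ∫ y, k x y ∂(μ.map y0) ∂(μ.map y0)
      = ∫ p, g p ∂((μ.map y0).prod (μ.map y0)) := by
    rw [integral_prod g hintg]
  rw [hiter]
  exact tv_bound _ _ hgm hg0 hg1 hβ
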